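/- Let a > −1 and define the scalar function f⁽¹⁾ : ℝ → ℝ by f⁽¹⁾(v) = (1+a)·v² − v³ − a·v. Then for every constant c ∈ ℝ there exists ε > 0 such that, with x = 1 and z = ε − 1, one has (x + z)·(f⁽¹⁾(x) + f⁽¹⁾(z)) > c·(x + z)². In particular, f⁽¹⁾ does not satisfy the plus-sign one-sided Lipschitz condition ⟨x + z, f⁽¹⁾(x) + f⁽¹⁾(z)⟩ ≤ c·‖x + z‖² for any constant c. -/
import Mathlib


/-- for `a > −1` the scalar function
`f⁽¹⁾(v) = (1+a)v² − v³ − a v` violates the plus-sign one-sided Lipschitz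
condition: for every `c` there is `ε > 0` such that with `x = 1`, `z = ε − 1`
one has `(x+z)(f⁽¹⁾(x)+f⁽¹⁾(z)) > c(x+z)²`. -/
theorem stmt_13 (a : ℝ) (ha : -1 < a) (f : ℝ → ℝ)
    (hf : ∀ v : ℝ, f v = (1 + a) * v ^ 2 - v ^ 3 - a * v) :
    ∀ c : ℝ, ∃ ε : ℝ, 0 < ε ∧
      ((1 : ℝ) + (ε - 1)) * (f 1 + f (ε - 1)) > c * ((1 : ℝ) + (ε - 1)) ^ 2 := by
  intro c
  have ha' : (0:ℝ) < 1 + a := by linarith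
  set B : ℝ := 4 * |a| + |c| + 10 with hB
  have hB0 : (0:ℝ) < B := by positivity
  set ε : ℝ := min 1 ((1 + a) / B) with hε
  have hε0 : 0 < ε := lt_min one_pos (div_pos ha' hB0)
  refine ⟨ε, hε0, ?_⟩
  have h1 : ε ≤ 1 := min_le_left _ _
  have h2 : ε ≤ (1 + a) / B := min_le_right _ _
  have h2' : ε * B ≤ 1 + a := by
    rw [← le_div_iff₀ hB0] at *; exact h2
  have hac : a ≤ |a| := le_abs_self a
  have hac2 : -|a| ≤ a := neg_abs_le a
  have hcc : c ≤ |c| := le_abs_self c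
  have hcc2 : -|c| ≤ c := neg_abs_le c
  rw [hf, hf]
  ring_nf
  nlinarith [mul_le_mul_of_nonneg_left h2' hε0.le,
    mul_le_mul_of_nonneg_left h1 hε0.le,
    mul_le_mul_of_nonneg_left (mul_le_mul_of_nonneg_left h1 hε0.le) hε0.le,
    mul_pos hε0 ha', mul_pos (mul_pos hε0 hε0) hε0,
    mul_le_mul_of_nonneg_left hcc (mul_nonneg hε0.le hε0.le),
    mul_le_mul_of_nonneg_left hac2 (mul_nonneg (mul_nonneg hε0.le hε0.le) hε0.le),
    mul_le_mul_of_nonneg_left hac (mul_nonneg hε0.le hε0.le)]
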